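/- arXiv:1608.02203 — 2 statements merged into one kernel-verified Lean document; each statement's English description precedes it below -/
import Mathlib

section
/- Let d_A, d_B, d_E be positive natural numbers and V an isometry from ℂ^{d_A} to ℂ^{d_B} ⊗ ℂ^{d_E}, with associated channel Φ(ρ) = Tr_E(V ρ Vᴴ). Then for every Borel probability measure μ₀ on the set S_{d_A} of states on ℂ^{d_A} there exists a Borel probability measure μ* on S_{d_A} supported by pure states (i.e. μ* assigns measure 1 to the set of rank-one projections) such that ρ̄(μ*) = ρ̄(μ₀) and χ(Φ(μ*)) ≥ χ(Φ(μ₀)), where ρ̄(μ) = ∫ ρ μ(dρ) and χ(Φ(μ)) = H(Φ(ρ̄(μ))) − ∫ H(Φ(ρ)) μ(dρ). -/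
open MeasureTheory ComplexOrder Matrix

noncomputable section

instance matMS {m n : Type*} : MeasurableSpace (Matrix m n ℂ) :=
  inferInstanceAs (MeasurableSpace (m → n → ℂ))

instance matBS {m n : Type*} [Countable m] [Countable n] : BorelSpace (Matrix m n ℂ) :=
  inferInstanceAs (BorelSpace (m → n → ℂ))

/-- The set of quantum states (density matrices). -/
def stateSet (n : ℕ) : Set (Matrix (Fin n) (Fin n) ℂ) :=
  {ρ | ρ.PosSemidef ∧ ρ.trace = 1}

/-- Von Neumann entropy: sum of `negMulLog` over eigenvalues. -/
def vnEntropy {ι : Type*} [Fintype ι] [DecidableEq ι] (ρ : Matrix ι ι ℂ) : ℝ :=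
  if h : ρ.IsHermitian then ∑ i, Real.negMulLog (h.eigenvalues i) else 0

/-- Partial trace over the second (environment) factor. -/
def ptraceE {dB dE : ℕ} (M : Matrix (Fin dB × Fin dE) (Fin dB × Fin dE) ℂ) :
    Matrix (Fin dB) (Fin dB) ℂ :=
  Matrix.of fun b b' => ∑ e, M (b, e) (b', e)

/-- Partial trace over the first factor. -/
def ptraceB {dB dE : ℕ} (M : Matrix (Fin dB × Fin dE) (Fin dB × Fin dE) ℂ) :
    Matrix (Fin dE) (Fin dE) ℂ :=
  Matrix.of fun e e' => ∑ b, M (b, e) (b, e')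

/-- Quantum mutual information I(B:E) of a bipartite state. -/
def qmi {dB dE : ℕ} (ω : Matrix (Fin dB × Fin dE) (Fin dB × Fin dE) ℂ) : ℝ :=
  vnEntropy (ptraceE ω) + vnEntropy (ptraceB ω) - vnEntropy ω

/-- The channel `ρ ↦ Tr_E (V ρ V†)` associated with a Stinespring isometry `V`. -/
def chanPhi {dA dB dE : ℕ} (V : Matrix (Fin dB × Fin dE) (Fin dA) ℂ)
    (ρ : Matrix (Fin dA) (Fin dA) ℂ) : Matrix (Fin dB) (Fin dB) ℂ :=
  ptraceE (V * ρ * Vᴴ)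

/-- The complementary channel `ρ ↦ Tr_B (V ρ V†)`. -/
def chanPhiHat {dA dB dE : ℕ} (V : Matrix (Fin dB × Fin dE) (Fin dA) ℂ)
    (ρ : Matrix (Fin dA) (Fin dA) ℂ) : Matrix (Fin dE) (Fin dE) ℂ :=
  ptraceB (V * ρ * Vᴴ)

/-- Barycenter (average state) of a generalized ensemble. -/
def barycenter {n : ℕ} (μ : ProbabilityMeasure (stateSet n)) :
    Matrix (Fin n) (Fin n) ℂ :=
  Matrix.of fun i j => ∫ ρ : stateSet n, ρ.1 i j ∂(μ : Measure (stateSet n))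

/-- Output χ-quantity of a generalized ensemble under a map `Φ`. -/
def gChiOut {n d : ℕ} (Φ : Matrix (Fin n) (Fin n) ℂ → Matrix (Fin d) (Fin d) ℂ)
    (μ : ProbabilityMeasure (stateSet n)) : ℝ :=
  vnEntropy (Φ (barycenter μ)) -
    ∫ ρ : stateSet n, vnEntropy (Φ ρ.1) ∂(μ : Measure (stateSet n))

/-- χ-quantity of a generalized ensemble. -/
def gChi {n : ℕ} (μ : ProbabilityMeasure (stateSet n)) : ℝ :=
  vnEntropy (barycenter μ) -
    ∫ ρ : stateSet n, vnEntropy ρ.1 ∂(μ : Measure (stateSet n))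

/-- Holevo χ-quantity of a finite ensemble. -/
def finChi {d m : ℕ} (π : Fin m → ℝ) (σ : Fin m → Matrix (Fin d) (Fin d) ℂ) : ℝ :=
  vnEntropy (∑ i, π i • σ i) - ∑ i, π i * vnEntropy (σ i)

/-- The set of pure states (rank-one projections) viewed inside the state space. -/
def pureStates (n : ℕ) : Set (stateSet n) := {ρ | ρ.1 * ρ.1 = ρ.1}

end


-- ===== auxiliary lemmas =====
open Matrix Polynomial

noncomputable section

lemma uconj_pow {d : ℕ} (U : Matrix.unitaryGroup (Fin d) ℂ) (D : Matrix (Fin d) (Fin d) ℂ) (n : ℕ) :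
    ((U : Matrix (Fin d) (Fin d) ℂ) * D * star (U : Matrix (Fin d) (Fin d) ℂ)) ^ n
      = (U : Matrix (Fin d) (Fin d) ℂ) * D ^ n * star (U : Matrix (Fin d) (Fin d) ℂ) := by
  induction n with
  | zero => simp [pow_zero, mul_one, (Matrix.mem_unitaryGroup_iff).mp U.2]
  | succ n ih =>
    rw [pow_succ, ih, pow_succ]
    have h1 : star (U : Matrix (Fin d) (Fin d) ℂ) * (U : Matrix (Fin d) (Fin d) ℂ) = 1 :=
      (Matrix.mem_unitaryGroup_iff').mp U.2
    calc (U : Matrix (Fin d) (Fin d) ℂ) * D ^ n * star (U : Matrix (Fin d) (Fin d) ℂ) *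
          ((U : Matrix (Fin d) (Fin d) ℂ) * D * star (U : Matrix (Fin d) (Fin d) ℂ))
        = (U : Matrix (Fin d) (Fin d) ℂ) * D ^ n * (star (U : Matrix (Fin d) (Fin d) ℂ) *
          (U : Matrix (Fin d) (Fin d) ℂ)) * D * star (U : Matrix (Fin d) (Fin d) ℂ) := by
          noncomm_ring
      _ = (U : Matrix (Fin d) (Fin d) ℂ) * (D ^ n * D) * star (U : Matrix (Fin d) (Fin d) ℂ) := by
          rw [h1]; noncomm_ring

lemma aeval_unitary_conj {d : ℕ} (U : Matrix.unitaryGroup (Fin d) ℂ)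
    (D : Matrix (Fin d) (Fin d) ℂ) (q : ℂ[X]) :
    Polynomial.aeval ((U : Matrix (Fin d) (Fin d) ℂ) * D * star (U : Matrix (Fin d) (Fin d) ℂ)) q
      = (U : Matrix (Fin d) (Fin d) ℂ) * Polynomial.aeval D q * star (U : Matrix (Fin d) (Fin d) ℂ) := by
  induction q using Polynomial.induction_on' with
  | add p q hp hq => rw [map_add, map_add, hp, hq]; noncomm_ring
  | monomial n a =>
    rw [Polynomial.aeval_monomial, Polynomial.aeval_monomial, uconj_pow]
    rw [Algebra.algebraMap_eq_smul_one]
    simp only [smul_mul_assoc, one_mul, Algebra.mul_smul_comm, mul_one]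

lemma aeval_diagonal' {d : ℕ} (f : Fin d → ℂ) (q : ℂ[X]) :
    Polynomial.aeval (Matrix.diagonal f) q
      = Matrix.diagonal (fun k => Polynomial.eval (f k) q) := by
  have h1 : Matrix.diagonal f = Matrix.diagonalAlgHom (n := Fin d) ℂ f := rfl
  rw [h1, Polynomial.aeval_algHom_apply]
  have h2 : Polynomial.aeval f q = fun k => Polynomial.eval (f k) q := by
    funext k
    have : (Polynomial.aeval f q) k = Polynomial.aeval (f k) q :=
      (Polynomial.aeval_algHom_apply (Pi.evalAlgHom ℂ (fun _ => ℂ) k) f q).symm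
    rw [this, Polynomial.aeval_def, ← Polynomial.eval_map, Algebra.algebraMap_self,
      Polynomial.map_id]
  rw [h2]
  rfl

end

noncomputable section
open Matrix Polynomial

variable {d : ℕ}

lemma aeval_eq_conj_diag {A : Matrix (Fin d) (Fin d) ℂ} (hA : A.IsHermitian) (p : ℝ[X]) :
    Polynomial.aeval A (p.map (algebraMap ℝ ℂ)) =
      (hA.eigenvectorUnitary : Matrix (Fin d) (Fin d) ℂ) *
        Matrix.diagonal (fun k => ((p.eval (hA.eigenvalues k) : ℝ) : ℂ)) *
        star (hA.eigenvectorUnitary : Matrix (Fin d) (Fin d) ℂ) := by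
  conv_lhs => rw [hA.spectral_theorem, Unitary.conjStarAlgAut_apply]
  rw [aeval_unitary_conj, aeval_diagonal']
  have : (fun k => Polynomial.eval ((RCLike.ofReal ∘ hA.eigenvalues) k)
      (p.map (algebraMap ℝ ℂ))) = fun k => ((p.eval (hA.eigenvalues k) : ℝ) : ℂ) := by
    funext k
    simp only [Function.comp_apply]
    rw [Polynomial.eval_map, Polynomial.eval₂_at_apply]
    rfl
  rw [this]

lemma trace_conj_diag (U : Matrix.unitaryGroup (Fin d) ℂ) (c : Fin d → ℂ) :
    ((U : Matrix (Fin d) (Fin d) ℂ) * Matrix.diagonal c *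
      star (U : Matrix (Fin d) (Fin d) ℂ)).trace = ∑ k, c k := by
  rw [Matrix.trace_mul_cycle, (Matrix.mem_unitaryGroup_iff').mp U.2, Matrix.one_mul,
    Matrix.trace_diagonal]

lemma unitary_entry_norm_le (U : Matrix.unitaryGroup (Fin d) ℂ) (i k : Fin d) :
    ‖(U : Matrix (Fin d) (Fin d) ℂ) i k‖ ≤ 1 := by
  have h1 : star (U : Matrix (Fin d) (Fin d) ℂ) * (U : Matrix (Fin d) (Fin d) ℂ) = 1 :=
    (Matrix.mem_unitaryGroup_iff').mp U.2
  have h2 : (∑ j, starRingEnd ℂ ((U : Matrix (Fin d) (Fin d) ℂ) j k) *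
      (U : Matrix (Fin d) (Fin d) ℂ) j k) = 1 := by
    have := congrFun (congrFun h1 k) k
    simpa [Matrix.mul_apply, Matrix.star_apply, Matrix.one_apply] using this
  have h3 : (∑ j, ‖(U : Matrix (Fin d) (Fin d) ℂ) j k‖ ^ 2) = 1 := by
    have h2' := congrArg Complex.re h2
    simp only [Complex.re_sum, Complex.mul_re, Complex.one_re] at h2'
    rw [← h2']
    apply Finset.sum_congr rfl
    intro j _
    rw [← Complex.normSq_eq_norm_sq, Complex.normSq_apply]
    simp only [Complex.conj_re, Complex.conj_im]
    ring
  have h4 : ‖(U : Matrix (Fin d) (Fin d) ℂ) i k‖ ^ 2 ≤ 1 := by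
    rw [← h3]
    exact Finset.single_le_sum (f := fun j => ‖(U : Matrix (Fin d) (Fin d) ℂ) j k‖ ^ 2)
      (fun j _ => sq_nonneg _) (Finset.mem_univ i)
  nlinarith [norm_nonneg ((U : Matrix (Fin d) (Fin d) ℂ) i k)]

lemma conj_diag_entry_norm_le (U : Matrix.unitaryGroup (Fin d) ℂ) (c : Fin d → ℂ) (i j : Fin d) :
    ‖((U : Matrix (Fin d) (Fin d) ℂ) * Matrix.diagonal c *
      star (U : Matrix (Fin d) (Fin d) ℂ)) i j‖ ≤ ∑ k, ‖c k‖ := by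
  have he : ((U : Matrix (Fin d) (Fin d) ℂ) * Matrix.diagonal c *
      star (U : Matrix (Fin d) (Fin d) ℂ)) i j
      = ∑ k, (U : Matrix (Fin d) (Fin d) ℂ) i k * c k *
          starRingEnd ℂ ((U : Matrix (Fin d) (Fin d) ℂ) j k) := by
    rw [Matrix.mul_apply]
    apply Finset.sum_congr rfl
    intro k _
    rw [Matrix.mul_diagonal, Matrix.star_apply]
    rfl
  rw [he]
  refine (norm_sum_le _ _).trans (Finset.sum_le_sum fun k _ => ?_)
  rw [norm_mul, norm_mul]
  have hc := norm_nonneg (c k)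
  have h1 := unitary_entry_norm_le U i k
  have h2 : ‖starRingEnd ℂ ((U : Matrix (Fin d) (Fin d) ℂ) j k)‖ ≤ 1 := by
    rw [RingHomIsometric.norm_map]
    exact unitary_entry_norm_le U j k
  calc ‖(U : Matrix (Fin d) (Fin d) ℂ) i k‖ * ‖c k‖ *
      ‖starRingEnd ℂ ((U : Matrix (Fin d) (Fin d) ℂ) j k)‖ ≤ 1 * ‖c k‖ * 1 := by
        gcongr
    _ = ‖c k‖ := by ring

end

noncomputable section
open Matrix Polynomial MeasureTheory ComplexOrder

variable {d : ℕ}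

/-- Apply a real function to a Hermitian matrix via the spectral decomposition. -/
def hermApply (g : ℝ → ℝ) {A : Matrix (Fin d) (Fin d) ℂ} (hA : A.IsHermitian) :
    Matrix (Fin d) (Fin d) ℂ :=
  (hA.eigenvectorUnitary : Matrix (Fin d) (Fin d) ℂ) *
    Matrix.diagonal (fun k => ((g (hA.eigenvalues k) : ℝ) : ℂ)) *
    star (hA.eigenvectorUnitary : Matrix (Fin d) (Fin d) ℂ)

/-- Square root of a positive semidefinite matrix via the spectral decomposition. -/
def Matrix.PosSemidef.sqrt {A : Matrix (Fin d) (Fin d) ℂ} (hA : A.PosSemidef) :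
    Matrix (Fin d) (Fin d) ℂ :=
  hermApply Real.sqrt hA.1

lemma Matrix.PosSemidef.posSemidef_sqrt {A : Matrix (Fin d) (Fin d) ℂ} (hA : A.PosSemidef) :
    hA.sqrt.PosSemidef := by
  rw [Matrix.PosSemidef.sqrt, hermApply, Matrix.star_eq_conjTranspose]
  exact (Matrix.PosSemidef.diagonal
    (fun k => Complex.zero_le_real.mpr (Real.sqrt_nonneg _))).mul_mul_conjTranspose_same _

lemma Matrix.PosSemidef.sqrt_mul_self {A : Matrix (Fin d) (Fin d) ℂ} (hA : A.PosSemidef) :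
    hA.sqrt * hA.sqrt = A := by
  have h1 : star (hA.1.eigenvectorUnitary : Matrix (Fin d) (Fin d) ℂ) *
      (hA.1.eigenvectorUnitary : Matrix (Fin d) (Fin d) ℂ) = 1 :=
    (Matrix.mem_unitaryGroup_iff').mp hA.1.eigenvectorUnitary.2
  have hD : Matrix.diagonal (fun k => ((Real.sqrt (hA.1.eigenvalues k) : ℝ) : ℂ)) *
      Matrix.diagonal (fun k => ((Real.sqrt (hA.1.eigenvalues k) : ℝ) : ℂ))
      = Matrix.diagonal (RCLike.ofReal ∘ hA.1.eigenvalues) := by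
    rw [Matrix.diagonal_mul_diagonal]
    congr 1
    funext k
    simp only [Function.comp_apply]
    rw [← Complex.ofReal_mul, Real.mul_self_sqrt (hA.eigenvalues_nonneg k)]
    rfl
  conv_rhs => rw [hA.1.spectral_theorem, Unitary.conjStarAlgAut_apply]
  rw [Matrix.PosSemidef.sqrt, hermApply]
  set U := (hA.1.eigenvectorUnitary : Matrix (Fin d) (Fin d) ℂ)
  set D := Matrix.diagonal (fun k => ((Real.sqrt (hA.1.eigenvalues k) : ℝ) : ℂ))
  calc U * D * star U * (U * D * star U) = U * (D * (star U * U) * D) * star U := by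
        noncomm_ring
    _ = U * Matrix.diagonal (RCLike.ofReal ∘ hA.1.eigenvalues) * star U := by
        rw [h1, Matrix.mul_one, hD]

lemma sqrt_eq_hermApply {A : Matrix (Fin d) (Fin d) ℂ} (hA : A.PosSemidef) :
    hA.sqrt = hermApply Real.sqrt hA.1 := rfl

lemma herm_entry_approx {A : Matrix (Fin d) (Fin d) ℂ} (hA : A.IsHermitian)
    (p : ℝ[X]) (g : ℝ → ℝ) (ε : ℝ)
    (hε : ∀ k, |p.eval (hA.eigenvalues k) - g (hA.eigenvalues k)| ≤ ε) (i j : Fin d) :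
    ‖(Polynomial.aeval A (p.map (algebraMap ℝ ℂ))) i j - (hermApply g hA) i j‖ ≤ d * ε := by
  rw [aeval_eq_conj_diag hA p]
  unfold hermApply
  rw [← Matrix.sub_apply, ← Matrix.sub_mul, ← Matrix.mul_sub, Matrix.diagonal_sub]
  refine (conj_diag_entry_norm_le _ _ i j).trans ?_
  have : ∀ k : Fin d, ‖((p.eval (hA.eigenvalues k) : ℝ) : ℂ) - ((g (hA.eigenvalues k) : ℝ) : ℂ)‖
      ≤ ε := by
    intro k
    rw [← Complex.ofReal_sub, Complex.norm_real]
    exact (hε k)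
  refine (Finset.sum_le_sum fun k _ => this k).trans ?_
  simp [Finset.sum_const, Finset.card_univ]

lemma herm_trace_approx {A : Matrix (Fin d) (Fin d) ℂ} (hA : A.IsHermitian)
    (p : ℝ[X]) (g : ℝ → ℝ) (ε : ℝ)
    (hε : ∀ k, |p.eval (hA.eigenvalues k) - g (hA.eigenvalues k)| ≤ ε) :
    |(Polynomial.aeval A (p.map (algebraMap ℝ ℂ))).trace.re - ∑ k, g (hA.eigenvalues k)| ≤ d * ε := by
  rw [aeval_eq_conj_diag hA p, trace_conj_diag]
  have : (∑ k, ((p.eval (hA.eigenvalues k) : ℝ) : ℂ)) = ((∑ k, p.eval (hA.eigenvalues k) : ℝ) : ℂ) := by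
    push_cast; ring
  rw [this, Complex.ofReal_re, ← Finset.sum_sub_distrib]
  refine (Finset.abs_sum_le_sum_abs _ _).trans ?_
  refine (Finset.sum_le_sum fun k _ => hε k).trans ?_
  simp [Finset.sum_const, Finset.card_univ]

lemma exists_poly_seq (g : ℝ → ℝ) (hg : ContinuousOn g (Set.Icc 0 1)) :
    ∃ p : ℕ → ℝ[X], ∀ n : ℕ, ∀ x ∈ Set.Icc (0:ℝ) 1,
      |(p n).eval x - g x| ≤ 1 / (n + 1) := by
  have h : ∀ n : ℕ, ∃ q : ℝ[X], ∀ x ∈ Set.Icc (0:ℝ) 1, |q.eval x - g x| ≤ 1 / (n + 1) := by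
    intro n
    obtain ⟨q, hq⟩ := exists_polynomial_near_of_continuousOn 0 1 g hg (1 / (n + 1))
      (by positivity)
    exact ⟨q, fun x hx => (hq x hx).le⟩
  exact ⟨fun n => (h n).choose, fun n => (h n).choose_spec⟩

lemma tendsto_of_abs_sub_le (f : ℕ → ℝ) (L c : ℝ)
    (h : ∀ n : ℕ, |f n - L| ≤ c / (n + 1)) :
    Filter.Tendsto f Filter.atTop (nhds L) := by
  rw [tendsto_iff_dist_tendsto_zero]
  apply squeeze_zero (fun n => dist_nonneg) (fun n => (Real.dist_eq _ _).trans_le (h n))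
  have h2 : Filter.Tendsto (fun n : ℕ => 1 / ((n : ℝ) + 1)) Filter.atTop (nhds 0) :=
    tendsto_one_div_add_atTop_nhds_zero_nat
  have := h2.const_mul c
  simpa [div_eq_mul_inv, mul_comm] using this

lemma tendsto_of_norm_sub_le (f : ℕ → ℂ) (L : ℂ) (c : ℝ)
    (h : ∀ n : ℕ, ‖f n - L‖ ≤ c / (n + 1)) :
    Filter.Tendsto f Filter.atTop (nhds L) := by
  rw [tendsto_iff_dist_tendsto_zero]
  apply squeeze_zero (fun n => dist_nonneg) (fun n => (dist_eq_norm _ _).trans_le (h n))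
  have h2 : Filter.Tendsto (fun n : ℕ => 1 / ((n : ℝ) + 1)) Filter.atTop (nhds 0) :=
    tendsto_one_div_add_atTop_nhds_zero_nat
  have := h2.const_mul c
  simpa [div_eq_mul_inv, mul_comm] using this

end



-- ===== state facts and measurability =====
noncomputable section
open Matrix Polynomial MeasureTheory ComplexOrder

variable {d : ℕ}

lemma trace_eq_sum_eigenvalues {A : Matrix (Fin d) (Fin d) ℂ} (hA : A.IsHermitian) :
    A.trace = ((∑ k, hA.eigenvalues k : ℝ) : ℂ) := by
  conv_lhs => rw [hA.spectral_theorem, Unitary.conjStarAlgAut_apply]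
  rw [trace_conj_diag]
  push_cast
  rfl

lemma state_sum_eigenvalues {A : Matrix (Fin d) (Fin d) ℂ} (hA : A ∈ stateSet d) :
    ∑ k, hA.1.1.eigenvalues k = 1 := by
  have := hA.2
  rw [trace_eq_sum_eigenvalues hA.1.1] at this
  exact_mod_cast this

lemma state_eigenvalues_mem {A : Matrix (Fin d) (Fin d) ℂ} (hA : A ∈ stateSet d) (k : Fin d) :
    hA.1.1.eigenvalues k ∈ Set.Icc (0:ℝ) 1 := by
  refine ⟨hA.1.eigenvalues_nonneg k, ?_⟩
  rw [← state_sum_eigenvalues hA]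
  exact Finset.single_le_sum (f := fun k => hA.1.1.eigenvalues k)
    (fun j _ => hA.1.eigenvalues_nonneg j) (Finset.mem_univ k)

lemma vnEntropy_state_eq {A : Matrix (Fin d) (Fin d) ℂ} (hA : A ∈ stateSet d) :
    vnEntropy A = ∑ k, Real.negMulLog (hA.1.1.eigenvalues k) := by
  rw [vnEntropy, dif_pos hA.1.1]

lemma vnEntropy_nonneg {A : Matrix (Fin d) (Fin d) ℂ} (hA : A ∈ stateSet d) :
    0 ≤ vnEntropy A := by
  rw [vnEntropy_state_eq hA]
  refine Finset.sum_nonneg fun k _ => ?_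
  obtain ⟨h0, h1⟩ := state_eigenvalues_mem hA k
  exact Real.negMulLog_nonneg h0 h1

lemma negMulLog_le_one {x : ℝ} (h0 : 0 ≤ x) : Real.negMulLog x ≤ 1 := by
  rcases eq_or_lt_of_le h0 with h | h
  · simp [← h, Real.negMulLog_zero]
  · have hinv : Real.log x⁻¹ ≤ x⁻¹ - 1 := Real.log_le_sub_one_of_pos (by positivity)
    have : Real.negMulLog x = x * Real.log x⁻¹ := by
      rw [Real.negMulLog, Real.log_inv]; ring
    rw [this]
    calc x * Real.log x⁻¹ ≤ x * (x⁻¹ - 1) := by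
          exact mul_le_mul_of_nonneg_left hinv h0
      _ = 1 - x := by field_simp
      _ ≤ 1 := by linarith

lemma vnEntropy_le_card {A : Matrix (Fin d) (Fin d) ℂ} (hA : A ∈ stateSet d) :
    vnEntropy A ≤ d := by
  rw [vnEntropy_state_eq hA]
  calc (∑ k, Real.negMulLog (hA.1.1.eigenvalues k)) ≤ ∑ _k : Fin d, (1:ℝ) :=
        Finset.sum_le_sum fun k _ => negMulLog_le_one (state_eigenvalues_mem hA k).1
    _ = d := by simp

instance matPMS {m n : Type*} [Finite m] [Finite n] :
    TopologicalSpace.PseudoMetrizableSpace (Matrix m n ℂ) :=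
  inferInstanceAs (TopologicalSpace.PseudoMetrizableSpace (m → n → ℂ))

lemma measurable_sqrt_state :
    Measurable fun ρ : stateSet d => (ρ.2.1).sqrt := by
  obtain ⟨p, hp⟩ := exists_poly_seq Real.sqrt Real.continuous_sqrt.continuousOn
  refine measurable_of_tendsto_metrizable
    (f := fun n => fun ρ : stateSet d => Polynomial.aeval ρ.1 ((p n).map (algebraMap ℝ ℂ)))
    (fun n => (Polynomial.continuous_aeval _).measurable.comp measurable_subtype_coe) ?_
  · rw [tendsto_pi_nhds]
    intro ρ
    apply tendsto_pi_nhds.mpr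
    intro i
    apply tendsto_pi_nhds.mpr
    intro j
    rw [sqrt_eq_hermApply]
    apply tendsto_of_norm_sub_le _ _ (d : ℝ)
    intro n
    have h1 : ∀ k, |(p n).eval (ρ.2.1.1.eigenvalues k) -
        Real.sqrt (ρ.2.1.1.eigenvalues k)| ≤ 1 / (n + 1) :=
      fun k => hp n _ (state_eigenvalues_mem ρ.2 k)
    have := herm_entry_approx ρ.2.1.1 (p n) Real.sqrt (1 / (n + 1)) h1 i j
    calc ‖Polynomial.aeval ρ.1 ((p n).map (algebraMap ℝ ℂ)) i j -
          hermApply Real.sqrt ρ.2.1.1 i j‖ ≤ d * (1 / (n + 1)) := this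
      _ = d / (n + 1) := by ring

lemma measurable_vnEntropy_comp {m : ℕ}
    (Φ : Matrix (Fin d) (Fin d) ℂ → Matrix (Fin m) (Fin m) ℂ)
    (hΦc : Continuous Φ) (hΦs : ∀ ρ : stateSet d, Φ ρ.1 ∈ stateSet m) :
    Measurable fun ρ : stateSet d => vnEntropy (Φ ρ.1) := by
  obtain ⟨p, hp⟩ := exists_poly_seq Real.negMulLog Real.continuous_negMulLog.continuousOn
  have hmeas : ∀ n : ℕ, Measurable fun ρ : stateSet d =>
      (Polynomial.aeval (Φ ρ.1) ((p n).map (algebraMap ℝ ℂ))).trace.re := by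
    intro n
    have hc : Continuous fun X : Matrix (Fin d) (Fin d) ℂ =>
        (Polynomial.aeval (Φ X) ((p n).map (algebraMap ℝ ℂ))).trace.re :=
      Complex.continuous_re.comp (((Polynomial.continuous_aeval _).comp hΦc).matrix_trace)
    exact hc.measurable.comp measurable_subtype_coe
  refine measurable_of_tendsto_metrizable
    (f := fun n => fun ρ : stateSet d =>
      (Polynomial.aeval (Φ ρ.1) ((p n).map (algebraMap ℝ ℂ))).trace.re) hmeas ?_
  · rw [tendsto_pi_nhds]
    intro ρ
    have hσ := hΦs ρ
    rw [vnEntropy_state_eq hσ]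
    apply tendsto_of_abs_sub_le _ _ (m : ℝ)
    intro n
    have h1 : ∀ k, |(p n).eval (hσ.1.1.eigenvalues k) -
        Real.negMulLog (hσ.1.1.eigenvalues k)| ≤ 1 / (n + 1) :=
      fun k => hp n _ (state_eigenvalues_mem hσ k)
    have := herm_trace_approx hσ.1.1 (p n) Real.negMulLog (1 / (n + 1)) h1
    calc |(Polynomial.aeval (Φ ρ.1) ((p n).map (algebraMap ℝ ℂ))).trace.re -
          ∑ k, Real.negMulLog (hσ.1.1.eigenvalues k)| ≤ m * (1 / (n + 1)) := this
      _ = m / (n + 1) := by ring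

end



-- ===== channel facts =====
noncomputable section
open Matrix Polynomial MeasureTheory ComplexOrder

variable {dA dB dE : ℕ}

lemma dot_expand {n : Type*} [Fintype n] (N : Matrix n n ℂ) (x : n → ℂ) :
    dotProduct (star x) (N *ᵥ x)
      = ∑ i, ∑ j, star (x i) * N i j * x j := by
  simp only [dotProduct, Matrix.mulVec, Pi.star_apply, Finset.mul_sum]
  refine Finset.sum_congr rfl fun i _ => Finset.sum_congr rfl fun j _ => by ring

lemma ptraceE_psd {M : Matrix (Fin dB × Fin dE) (Fin dB × Fin dE) ℂ} (hM : M.PosSemidef) :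
    (ptraceE M).PosSemidef := by
  rw [Matrix.posSemidef_iff_dotProduct_mulVec]
  constructor
  · rw [Matrix.IsHermitian]
    ext b b'
    rw [Matrix.conjTranspose_apply, ptraceE]
    simp only [Matrix.of_apply]
    rw [star_sum]
    refine Finset.sum_congr rfl fun e _ => ?_
    have := congrFun (congrFun hM.1 (b, e)) (b', e)
    rw [Matrix.conjTranspose_apply] at this
    exact this
  · intro x
    set y : Fin dE → (Fin dB × Fin dE → ℂ) := fun e p => if p.2 = e then x p.1 else 0 with hy
    have hR : ∀ e, dotProduct (star (y e)) (M *ᵥ y e)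
        = ∑ b, ∑ b', star (x b) * M (b, e) (b', e) * x b' := by
      intro e
      rw [dot_expand]
      simp only [hy, Fintype.sum_prod_type, apply_ite (star : ℂ → ℂ), star_zero, ite_mul,
        zero_mul, mul_ite, mul_zero, Finset.sum_ite_eq', Finset.mem_univ, if_true]
      refine Finset.sum_congr rfl fun b _ => ?_
      rw [Finset.sum_comm]
      simp
    have key : dotProduct (star x) (ptraceE M *ᵥ x)
        = ∑ e, dotProduct (star (y e)) (M *ᵥ (y e)) := by
      simp only [hR]
      rw [dot_expand]
      have h1 : ∀ b b', star (x b) * ptraceE M b b' * x b'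
          = ∑ e, star (x b) * M (b, e) (b', e) * x b' := by
        intro b b'
        have : ptraceE M b b' = ∑ e, M (b, e) (b', e) := rfl
        rw [this, Finset.mul_sum, Finset.sum_mul]
      simp only [h1]
      have h2 : ∀ (T : Fin dB → Fin dB → Fin dE → ℂ),
          ∑ b, ∑ b', ∑ e, T b b' e = ∑ e, ∑ b, ∑ b', T b b' e := by
        intro T
        have hs : ∀ b, ∑ b', ∑ e, T b b' e = ∑ e, ∑ b', T b b' e := fun b => Finset.sum_comm
        simp_rw [hs]
        exact Finset.sum_comm
      exact h2 fun b b' e => star (x b) * M (b, e) (b', e) * x b'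
    rw [key]
    exact Finset.sum_nonneg fun e _ => hM.dotProduct_mulVec_nonneg (y e)

lemma ptraceE_trace (M : Matrix (Fin dB × Fin dE) (Fin dB × Fin dE) ℂ) :
    (ptraceE M).trace = M.trace := by
  simp only [Matrix.trace, Matrix.diag, ptraceE, Matrix.of_apply, Fintype.sum_prod_type]

lemma chanPhi_mem_stateSet (V : Matrix (Fin dB × Fin dE) (Fin dA) ℂ) (hV : Vᴴ * V = 1)
    {ρ : Matrix (Fin dA) (Fin dA) ℂ} (hρ : ρ ∈ stateSet dA) :
    chanPhi V ρ ∈ stateSet dB := by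
  constructor
  · exact ptraceE_psd (hρ.1.mul_mul_conjTranspose_same V)
  · rw [chanPhi, ptraceE_trace, Matrix.trace_mul_cycle, hV, Matrix.one_mul]
    exact hρ.2

lemma ptraceE_sum {m : ℕ} (f : Fin m → Matrix (Fin dB × Fin dE) (Fin dB × Fin dE) ℂ) :
    ptraceE (∑ j, f j) = ∑ j, ptraceE (f j) := by
  ext b b'
  simp only [ptraceE, Matrix.of_apply, Matrix.sum_apply]
  rw [Finset.sum_comm]

lemma ptraceE_smul (c : ℝ) (M : Matrix (Fin dB × Fin dE) (Fin dB × Fin dE) ℂ) :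
    ptraceE (c • M) = c • ptraceE M := by
  ext b b'
  simp [ptraceE, Finset.smul_sum]

lemma chanPhi_sum_smul {m : ℕ} (V : Matrix (Fin dB × Fin dE) (Fin dA) ℂ)
    (w : Fin m → ℝ) (f : Fin m → Matrix (Fin dA) (Fin dA) ℂ) :
    chanPhi V (∑ j, w j • f j) = ∑ j, w j • chanPhi V (f j) := by
  rw [chanPhi]
  have h1 : V * (∑ j, w j • f j) * Vᴴ = ∑ j, w j • (V * f j * Vᴴ) := by
    rw [Matrix.mul_sum, Matrix.sum_mul]
    refine Finset.sum_congr rfl fun j _ => ?_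
    rw [Matrix.mul_smul, Matrix.smul_mul]
  rw [h1, ptraceE_sum]
  exact Finset.sum_congr rfl fun j _ => ptraceE_smul _ _

lemma chanPhi_continuous (V : Matrix (Fin dB × Fin dE) (Fin dA) ℂ) :
    Continuous (chanPhi (dA := dA) V) := by
  have h1 : Continuous fun ρ : Matrix (Fin dA) (Fin dA) ℂ => V * ρ * Vᴴ :=
    (continuous_const.matrix_mul continuous_id).matrix_mul continuous_const
  have h2 : Continuous (ptraceE (dB := dB) (dE := dE)) := by
    apply continuous_pi
    intro b
    apply continuous_pi
    intro b'
    have : (fun M : Matrix (Fin dB × Fin dE) (Fin dB × Fin dE) ℂ => ptraceE M b b')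
        = fun M => ∑ e, M (b, e) (b', e) := rfl
    rw [this]
    exact continuous_finset_sum _ fun e _ =>
      (continuous_apply ((b', e) : Fin dB × Fin dE)).comp
        (continuous_apply ((b, e) : Fin dB × Fin dE))
  exact h2.comp h1

end


-- ===== concavity of von Neumann entropy =====
noncomputable section
open Matrix Polynomial MeasureTheory ComplexOrder

variable {d m : ℕ}

lemma psd_diag_nonneg {N : Matrix (Fin d) (Fin d) ℂ} (hN : N.PosSemidef) (j : Fin d) :
    0 ≤ (N j j).re ∧ (N j j).im = 0 := by
  have h := hN.dotProduct_mulVec_nonneg (Pi.single j 1)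
  have he : dotProduct (star (Pi.single j 1 : Fin d → ℂ))
      (N *ᵥ (Pi.single j 1 : Fin d → ℂ)) = N j j := by
    rw [dot_expand]
    simp [Pi.single_apply, apply_ite (star : ℂ → ℂ), ite_mul, mul_ite, Finset.sum_ite_eq,
      Finset.sum_ite_eq']
  rw [he] at h
  rw [Complex.le_def] at h
  simp at h
  exact ⟨h.1, h.2.symm⟩

lemma psd_diag_eq_re {N : Matrix (Fin d) (Fin d) ℂ} (hN : N.PosSemidef) (j : Fin d) :
    N j j = (((N j j).re : ℝ) : ℂ) := by
  have := (psd_diag_nonneg hN j).2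
  exact Complex.ext rfl (by simp [this])

lemma unitary_sq_col (U : Matrix.unitaryGroup (Fin d) ℂ) (k : Fin d) :
    ∑ j, ‖(U : Matrix (Fin d) (Fin d) ℂ) j k‖ ^ 2 = 1 := by
  have h1 : star (U : Matrix (Fin d) (Fin d) ℂ) * (U : Matrix (Fin d) (Fin d) ℂ) = 1 :=
    (Matrix.mem_unitaryGroup_iff').mp U.2
  have h2 : (∑ j, starRingEnd ℂ ((U : Matrix (Fin d) (Fin d) ℂ) j k) *
      (U : Matrix (Fin d) (Fin d) ℂ) j k) = 1 := by
    have := congrFun (congrFun h1 k) k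
    simpa [Matrix.mul_apply, Matrix.star_apply, Matrix.one_apply] using this
  have h2' := congrArg Complex.re h2
  simp only [Complex.re_sum, Complex.mul_re, Complex.one_re] at h2'
  rw [← h2']
  refine Finset.sum_congr rfl fun j _ => ?_
  rw [← Complex.normSq_eq_norm_sq, Complex.normSq_apply]
  simp only [Complex.conj_re, Complex.conj_im]
  ring

lemma unitary_sq_row (U : Matrix.unitaryGroup (Fin d) ℂ) (j : Fin d) :
    ∑ k, ‖(U : Matrix (Fin d) (Fin d) ℂ) j k‖ ^ 2 = 1 := by
  have h1 : (U : Matrix (Fin d) (Fin d) ℂ) * star (U : Matrix (Fin d) (Fin d) ℂ) = 1 :=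
    (Matrix.mem_unitaryGroup_iff).mp U.2
  have h2 : (∑ k, (U : Matrix (Fin d) (Fin d) ℂ) j k *
      starRingEnd ℂ ((U : Matrix (Fin d) (Fin d) ℂ) j k)) = 1 := by
    have := congrFun (congrFun h1 j) j
    simpa [Matrix.mul_apply, Matrix.star_apply, Matrix.one_apply] using this
  have h2' := congrArg Complex.re h2
  simp only [Complex.re_sum, Complex.mul_re, Complex.one_re] at h2'
  rw [← h2']
  refine Finset.sum_congr rfl fun k _ => ?_
  rw [← Complex.normSq_eq_norm_sq, Complex.normSq_apply]
  simp only [Complex.conj_re, Complex.conj_im]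
  ring

/-- Shannon entropy of the diagonal (in any orthonormal basis) dominates `vnEntropy`. -/
lemma sum_negMulLog_diag_ge {σ : Matrix (Fin d) (Fin d) ℂ} (hσ : σ ∈ stateSet d)
    (U : Matrix.unitaryGroup (Fin d) ℂ) :
    vnEntropy σ ≤ ∑ j, Real.negMulLog
      ((star (U : Matrix (Fin d) (Fin d) ℂ) * σ * (U : Matrix (Fin d) (Fin d) ℂ)) j j).re := by
  classical
  set hH := hσ.1.1 with hHdef
  set W : Matrix.unitaryGroup (Fin d) ℂ := hH.eigenvectorUnitary with hW
  set lam := hH.eigenvalues with hlam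
  set B : Matrix.unitaryGroup (Fin d) ℂ := (star U) * W with hB
  have hBc : (B : Matrix (Fin d) (Fin d) ℂ)
      = star (U : Matrix (Fin d) (Fin d) ℂ) * (W : Matrix (Fin d) (Fin d) ℂ) := rfl
  set D : Fin d → Fin d → ℝ := fun j k => ‖(B : Matrix (Fin d) (Fin d) ℂ) j k‖ ^ 2 with hD
  have hq : ∀ j, ((star (U : Matrix (Fin d) (Fin d) ℂ) * σ * (U : Matrix (Fin d) (Fin d) ℂ)) j j).re
      = ∑ k, D j k * lam k := by
    intro j
    have hσs : σ = (W : Matrix (Fin d) (Fin d) ℂ) * Matrix.diagonal (fun k => ((lam k : ℝ) : ℂ)) *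
        star (W : Matrix (Fin d) (Fin d) ℂ) := by
      conv_lhs => rw [hH.spectral_theorem, Unitary.conjStarAlgAut_apply]
      rfl
    have hconj : star (U : Matrix (Fin d) (Fin d) ℂ) * σ * (U : Matrix (Fin d) (Fin d) ℂ)
        = (B : Matrix (Fin d) (Fin d) ℂ) * Matrix.diagonal (fun k => ((lam k : ℝ) : ℂ)) *
          star (B : Matrix (Fin d) (Fin d) ℂ) := by
      rw [hσs, hBc, StarMul.star_mul, star_star]
      noncomm_ring
    rw [hconj]
    have he : ((B : Matrix (Fin d) (Fin d) ℂ) * Matrix.diagonal (fun k => ((lam k : ℝ) : ℂ)) *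
        star (B : Matrix (Fin d) (Fin d) ℂ)) j j
        = ∑ k, (B : Matrix (Fin d) (Fin d) ℂ) j k * ((lam k : ℝ) : ℂ) *
            starRingEnd ℂ ((B : Matrix (Fin d) (Fin d) ℂ) j k) := by
      rw [Matrix.mul_apply]
      refine Finset.sum_congr rfl fun k _ => ?_
      rw [Matrix.mul_diagonal, Matrix.star_apply]
      rfl
    rw [he, Complex.re_sum]
    refine Finset.sum_congr rfl fun k _ => ?_
    have : (B : Matrix (Fin d) (Fin d) ℂ) j k * ((lam k : ℝ) : ℂ) *
        starRingEnd ℂ ((B : Matrix (Fin d) (Fin d) ℂ) j k)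
        = ((lam k : ℝ) : ℂ) * ((B : Matrix (Fin d) (Fin d) ℂ) j k *
            starRingEnd ℂ ((B : Matrix (Fin d) (Fin d) ℂ) j k)) := by ring
    rw [this, Complex.mul_conj, ← Complex.ofReal_mul, Complex.ofReal_re, hD]
    rw [Complex.normSq_eq_norm_sq]
    ring
  have hD0 : ∀ j k, 0 ≤ D j k := fun j k => sq_nonneg _
  have hDrow : ∀ j, ∑ k, D j k = 1 := fun j => unitary_sq_row B j
  have hDcol : ∀ k, ∑ j, D j k = 1 := fun k => unitary_sq_col B k
  have hlam0 : ∀ k, lam k ∈ Set.Icc (0:ℝ) 1 := fun k => state_eigenvalues_mem hσ k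
  have step : ∀ j, ∑ k, D j k * Real.negMulLog (lam k)
      ≤ Real.negMulLog (∑ k, D j k * lam k) := by
    intro j
    have := Real.concaveOn_negMulLog.le_map_sum (t := Finset.univ)
      (w := fun k => D j k) (p := fun k => lam k)
      (fun k _ => hD0 j k) (hDrow j) (fun k _ => (hlam0 k).1)
    simpa [smul_eq_mul] using this
  rw [vnEntropy_state_eq hσ]
  calc ∑ k, Real.negMulLog (hσ.1.1.eigenvalues k)
      = ∑ k, (∑ j, D j k) * Real.negMulLog (lam k) := by
        refine Finset.sum_congr rfl fun k _ => ?_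
        rw [hDcol k, one_mul]
    _ = ∑ j, ∑ k, D j k * Real.negMulLog (lam k) := by
        rw [Finset.sum_comm]
        exact Finset.sum_congr rfl fun k _ => by rw [Finset.sum_mul]
    _ ≤ ∑ j, Real.negMulLog (∑ k, D j k * lam k) := Finset.sum_le_sum fun j _ => step j
    _ = ∑ j, Real.negMulLog
        ((star (U : Matrix (Fin d) (Fin d) ℂ) * σ * (U : Matrix (Fin d) (Fin d) ℂ)) j j).re := by
        refine Finset.sum_congr rfl fun j _ => ?_
        rw [hq j]

lemma posSemidef_smul_real {A : Matrix (Fin d) (Fin d) ℂ} (hA : A.PosSemidef) {c : ℝ}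
    (hc : 0 ≤ c) : (c • A).PosSemidef := by
  rw [Matrix.posSemidef_iff_dotProduct_mulVec]
  constructor
  · rw [Matrix.IsHermitian]
    ext i j
    rw [Matrix.conjTranspose_apply]
    simp only [Matrix.smul_apply, star_smul, star_trivial]
    have := congrFun (congrFun hA.1 i) j
    rw [Matrix.conjTranspose_apply] at this
    rw [← this]
  · intro x
    have h1 : (c • A) *ᵥ x = c • (A *ᵥ x) := by
      ext i
      simp [Matrix.mulVec, dotProduct, Finset.smul_sum, smul_mul_assoc, mul_assoc]
    rw [h1, dotProduct_smul]
    have h2 := hA.dotProduct_mulVec_nonneg x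
    have hc' : (0:ℂ) ≤ (c : ℂ) := by exact_mod_cast Complex.zero_le_real.mpr hc
    calc (0:ℂ) = (c:ℂ) * 0 := by ring
      _ ≤ (c:ℂ) * (dotProduct (star x) (A *ᵥ x)) := by
          exact mul_le_mul_of_nonneg_left h2 hc'
      _ = c • (dotProduct (star x) (A *ᵥ x)) := by
          rw [Complex.real_smul]

lemma posSemidef_sum_fin {k : ℕ} (f : Fin k → Matrix (Fin d) (Fin d) ℂ)
    (hf : ∀ i, (f i).PosSemidef) : (∑ i, f i).PosSemidef := by
  classical
  refine Finset.sum_induction f Matrix.PosSemidef (fun a b ha hb => ha.add hb)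
    (Matrix.PosSemidef.zero) (fun i _ => hf i)

lemma mix_mem_stateSet (w : Fin m → ℝ) (σ : Fin m → Matrix (Fin d) (Fin d) ℂ)
    (hσ : ∀ i, σ i ∈ stateSet d) (hw0 : ∀ i, 0 ≤ w i) (hw1 : ∑ i, w i = 1) :
    (∑ i, w i • σ i) ∈ stateSet d := by
  constructor
  · exact posSemidef_sum_fin _ fun i => posSemidef_smul_real (hσ i).1 (hw0 i)
  · rw [Matrix.trace_sum]
    have : ∀ i, (w i • σ i).trace = ((w i : ℝ) : ℂ) := by
      intro i
      rw [Matrix.trace_smul, (hσ i).2]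
      simp [Complex.real_smul]
    rw [Finset.sum_congr rfl fun i _ => this i]
    rw [← Complex.ofReal_sum, hw1, Complex.ofReal_one]

/-- Concavity of von Neumann entropy. -/
lemma vnEntropy_concave (w : Fin m → ℝ) (σ : Fin m → Matrix (Fin d) (Fin d) ℂ)
    (hσ : ∀ i, σ i ∈ stateSet d) (hw0 : ∀ i, 0 ≤ w i) (hw1 : ∑ i, w i = 1) :
    ∑ i, w i * vnEntropy (σ i) ≤ vnEntropy (∑ i, w i • σ i) := by
  classical
  set sbar := ∑ i, w i • σ i with hsbar
  have hbar : sbar ∈ stateSet d := mix_mem_stateSet w σ hσ hw0 hw1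
  set hH := hbar.1.1 with hHdef
  set U : Matrix.unitaryGroup (Fin d) ℂ := hH.eigenvectorUnitary with hU
  set q : Fin m → Fin d → ℝ := fun i j =>
    ((star (U : Matrix (Fin d) (Fin d) ℂ) * σ i * (U : Matrix (Fin d) (Fin d) ℂ)) j j).re with hqdef
  have hconj_psd : ∀ i, (star (U : Matrix (Fin d) (Fin d) ℂ) * σ i *
      (U : Matrix (Fin d) (Fin d) ℂ)).PosSemidef := by
    intro i
    have := (hσ i).1.conjTranspose_mul_mul_same (U : Matrix (Fin d) (Fin d) ℂ)
    rwa [← Matrix.star_eq_conjTranspose] at this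
  have hq0 : ∀ i j, 0 ≤ q i j := fun i j => (psd_diag_nonneg (hconj_psd i) j).1
  have hq1 : ∀ i, ∑ j, q i j = 1 := by
    intro i
    have ht : (star (U : Matrix (Fin d) (Fin d) ℂ) * σ i *
        (U : Matrix (Fin d) (Fin d) ℂ)).trace = 1 := by
      rw [Matrix.trace_mul_cycle, (Matrix.mem_unitaryGroup_iff).mp U.2, Matrix.one_mul]
      exact (hσ i).2
    have := congrArg Complex.re ht
    rw [Matrix.trace, Complex.re_sum] at this
    simpa [Matrix.diag] using this
  have hmu : ∀ j, hH.eigenvalues j = ∑ i, w i * q i j := by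
    intro j
    have hdiag := hH.conjStarAlgAut_star_eigenvectorUnitary
    simp only [Unitary.conjStarAlgAut_apply, Unitary.coe_star, star_star] at hdiag
    have hentry := congrFun (congrFun hdiag j) j
    have hsum : star (U : Matrix (Fin d) (Fin d) ℂ) * sbar * (U : Matrix (Fin d) (Fin d) ℂ)
        = ∑ i, w i • (star (U : Matrix (Fin d) (Fin d) ℂ) * σ i *
            (U : Matrix (Fin d) (Fin d) ℂ)) := by
      rw [hsbar, Matrix.mul_sum, Matrix.sum_mul]
      refine Finset.sum_congr rfl fun i _ => ?_
      rw [Matrix.mul_smul, Matrix.smul_mul]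
    have h2 : (∑ i, w i • (star (U : Matrix (Fin d) (Fin d) ℂ) * σ i *
        (U : Matrix (Fin d) (Fin d) ℂ))) j j = ((hH.eigenvalues j : ℝ) : ℂ) := by
      rw [← hsum, hentry]
      simp [Matrix.diagonal_apply_eq]
    have h3 := congrArg Complex.re h2
    rw [Matrix.sum_apply, Complex.re_sum] at h3
    simp only [Matrix.smul_apply, Complex.real_smul, Complex.mul_re, Complex.ofReal_re,
      Complex.ofReal_im, zero_mul, sub_zero] at h3
    rw [← h3]
  have step1 : ∀ j, ∑ i, w i * Real.negMulLog (q i j)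
      ≤ Real.negMulLog (hH.eigenvalues j) := by
    intro j
    rw [hmu j]
    have := Real.concaveOn_negMulLog.le_map_sum (t := Finset.univ)
      (w := w) (p := fun i => q i j) (fun i _ => hw0 i) hw1 (fun i _ => hq0 i j)
    simpa [smul_eq_mul] using this
  have step2 : ∀ i, vnEntropy (σ i) ≤ ∑ j, Real.negMulLog (q i j) :=
    fun i => sum_negMulLog_diag_ge (hσ i) U
  calc ∑ i, w i * vnEntropy (σ i)
      ≤ ∑ i, w i * ∑ j, Real.negMulLog (q i j) :=
        Finset.sum_le_sum fun i _ => mul_le_mul_of_nonneg_left (step2 i) (hw0 i)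
    _ = ∑ j, ∑ i, w i * Real.negMulLog (q i j) := by
        simp_rw [Finset.mul_sum]
        exact Finset.sum_comm
    _ ≤ ∑ j, Real.negMulLog (hH.eigenvalues j) := Finset.sum_le_sum fun j _ => step1 j
    _ = vnEntropy sbar := (vnEntropy_state_eq hbar).symm

end



-- ===== pure state construction =====
noncomputable section
open Matrix Polynomial MeasureTheory ComplexOrder NNReal ENNReal

variable {n : ℕ}

lemma re_star_mul_self (z : ℂ) : (star z * z).re = ‖z‖ ^ 2 := by
  rw [mul_comm, show star z = starRingEnd ℂ z from rfl, Complex.mul_conj, Complex.ofReal_re]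
  simp [Complex.normSq_eq_norm_sq]

def vstate (v : Fin n → ℂ) : Matrix (Fin n) (Fin n) ℂ := Matrix.vecMulVec v (star v)

lemma vstate_apply (v : Fin n → ℂ) (i k : Fin n) :
    vstate v i k = v i * starRingEnd ℂ (v k) := rfl

lemma vstate_psd (v : Fin n → ℂ) : (vstate v).PosSemidef := by
  rw [vstate, Matrix.vecMulVec_eq (Fin 1), ← Matrix.conjTranspose_replicateCol]
  exact Matrix.posSemidef_self_mul_conjTranspose _

lemma mul_conj_self (z : ℂ) : z * starRingEnd ℂ z = ((‖z‖ ^ 2 : ℝ) : ℂ) := by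
  rw [Complex.mul_conj]
  norm_cast
  simp [Complex.normSq_eq_norm_sq]

lemma vstate_trace (v : Fin n → ℂ) :
    (vstate v).trace = ((∑ i, ‖v i‖ ^ 2 : ℝ) : ℂ) := by
  have hd : ∀ i, (vstate v).diag i = ((‖v i‖ ^ 2 : ℝ) : ℂ) := by
    intro i
    rw [Matrix.diag]
    rw [vstate_apply, mul_conj_self]
  rw [Matrix.trace, Finset.sum_congr rfl fun i _ => hd i, ← Complex.ofReal_sum]

lemma vstate_sq (v : Fin n → ℂ) :
    vstate v * vstate v = (∑ i, ‖v i‖ ^ 2 : ℝ) • vstate v := by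
  ext i k
  rw [Matrix.mul_apply]
  simp only [vstate_apply, Matrix.smul_apply]
  have key : ∀ l, v i * starRingEnd ℂ (v l) * (v l * starRingEnd ℂ (v k))
      = ((‖v l‖ ^ 2 : ℝ) : ℂ) * (v i * starRingEnd ℂ (v k)) := by
    intro l
    calc v i * starRingEnd ℂ (v l) * (v l * starRingEnd ℂ (v k))
        = (v l * starRingEnd ℂ (v l)) * (v i * starRingEnd ℂ (v k)) := by ring
      _ = ((‖v l‖ ^ 2 : ℝ) : ℂ) * (v i * starRingEnd ℂ (v k)) := by rw [mul_conj_self]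
  rw [Finset.sum_congr rfl fun l _ => key l, ← Finset.sum_mul]
  rw [Complex.real_smul]
  push_cast
  ring

/-- The weight of the `j`-th column. -/
def wt (j : Fin n) (ρ : stateSet n) : ℝ≥0 :=
  ⟨(ρ.1 j j).re, (psd_diag_nonneg ρ.2.1 j).1⟩

/-- The `j`-th column of the square root of `ρ`. -/
def colv (j : Fin n) (ρ : stateSet n) : Fin n → ℂ := fun i => (ρ.2.1).sqrt i j

def e0 (h : 0 < n) : Fin n → ℂ := Pi.single ⟨0, h⟩ 1

lemma e0_norm_sq (h : 0 < n) (x : Fin n) :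
    ‖e0 h x‖ ^ 2 = if x = ⟨0, h⟩ then (1:ℝ) else 0 := by
  rcases eq_or_ne x ⟨0, h⟩ with rfl | hx
  · simp [e0]
  · simp [e0, Pi.single_eq_of_ne hx, hx]

lemma e0_sum (h : 0 < n) : ∑ x, ‖e0 h x‖ ^ 2 = 1 := by
  rw [Finset.sum_congr rfl fun x _ => e0_norm_sq h x, Finset.sum_ite_eq' Finset.univ]
  simp

lemma sqrt_herm_entry (ρ : stateSet n) (i j : Fin n) :
    (ρ.2.1).sqrt j i = star ((ρ.2.1).sqrt i j) := by
  have hSh : (ρ.2.1).sqrt.IsHermitian := (ρ.2.1).posSemidef_sqrt.1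
  have := congrFun (congrFun hSh i) j
  rw [Matrix.conjTranspose_apply] at this
  rw [← this, star_star]

lemma colv_norm_sum (j : Fin n) (ρ : stateSet n) :
    ∑ i, ‖colv j ρ i‖ ^ 2 = (wt j ρ : ℝ) := by
  have hmul : (ρ.2.1).sqrt * (ρ.2.1).sqrt = ρ.1 := (ρ.2.1).sqrt_mul_self
  have hjj : (ρ.1 : Matrix (Fin n) (Fin n) ℂ) j j
      = ∑ i, star ((ρ.2.1).sqrt i j) * (ρ.2.1).sqrt i j := by
    conv_lhs => rw [← hmul]
    rw [Matrix.mul_apply]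
    exact Finset.sum_congr rfl fun i _ => by rw [sqrt_herm_entry ρ i j]
  have hre := congrArg Complex.re hjj
  rw [Complex.re_sum] at hre
  rw [show (wt j ρ : ℝ) = (ρ.1 j j).re from rfl, hre]
  exact Finset.sum_congr rfl fun i _ => (re_star_mul_self ((ρ.2.1).sqrt i j)).symm

lemma sum_vstate_colv (ρ : stateSet n) :
    ∑ j, vstate (colv j ρ) = ρ.1 := by
  have hmul : (ρ.2.1).sqrt * (ρ.2.1).sqrt = ρ.1 := (ρ.2.1).sqrt_mul_self
  ext i k
  rw [Matrix.sum_apply]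
  conv_rhs => rw [← hmul]
  rw [Matrix.mul_apply]
  refine Finset.sum_congr rfl fun j _ => ?_
  rw [vstate_apply, sqrt_herm_entry ρ k j]
  rfl

lemma wt_sum_one (ρ : stateSet n) : ∑ j, (wt j ρ : ℝ) = 1 := by
  have ht := ρ.2.2
  have hre := congrArg Complex.re ht
  rw [Matrix.trace, Complex.re_sum] at hre
  simp only [Matrix.diag] at hre
  exact hre

lemma wt_le_one (j : Fin n) (ρ : stateSet n) : (wt j ρ : ℝ) ≤ 1 := by
  rw [← wt_sum_one ρ]
  exact Finset.single_le_sum (f := fun j => (wt j ρ : ℝ))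
    (fun l _ => (wt l ρ).coe_nonneg) (Finset.mem_univ j)

/-- The `j`-th pure component of `ρ`, as a state (with a junk default to handle weight 0). -/
def purify (h : 0 < n) (j : Fin n) (ρ : stateSet n) : stateSet n :=
  if hw : (wt j ρ : ℝ) = 0 then
    ⟨vstate (e0 h), by
      constructor
      · exact vstate_psd _
      · rw [vstate_trace, e0_sum]
        norm_num⟩
  else
    ⟨(wt j ρ : ℝ)⁻¹ • vstate (colv j ρ), by
      constructor
      · exact posSemidef_smul_real (vstate_psd _) (inv_nonneg.mpr (wt j ρ).coe_nonneg)
      · rw [Matrix.trace_smul, vstate_trace, colv_norm_sum, Complex.real_smul,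
          ← Complex.ofReal_mul, inv_mul_cancel₀ hw, Complex.ofReal_one]⟩

lemma purify_pure (h : 0 < n) (j : Fin n) (ρ : stateSet n) :
    purify h j ρ ∈ pureStates n := by
  rw [pureStates, Set.mem_setOf_eq, purify]
  split_ifs with hw
  · show vstate (e0 h) * vstate (e0 h) = vstate (e0 h)
    rw [vstate_sq, e0_sum, one_smul]
  · show ((wt j ρ : ℝ)⁻¹ • vstate (colv j ρ)) * ((wt j ρ : ℝ)⁻¹ • vstate (colv j ρ))
        = (wt j ρ : ℝ)⁻¹ • vstate (colv j ρ)
    rw [Matrix.smul_mul, Matrix.mul_smul, vstate_sq, colv_norm_sum, smul_smul, smul_smul]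
    congr 1
    field_simp

lemma wt_smul_purify (h : 0 < n) (j : Fin n) (ρ : stateSet n) :
    (wt j ρ : ℝ) • (purify h j ρ).1 = vstate (colv j ρ) := by
  rw [purify]
  split_ifs with hw
  · have hcv : ∀ i, colv j ρ i = 0 := by
      intro i
      have h0 : ∑ i, ‖colv j ρ i‖ ^ 2 = 0 := by rw [colv_norm_sum, hw]
      have := (Finset.sum_eq_zero_iff_of_nonneg (fun i _ => sq_nonneg ‖colv j ρ i‖)).mp h0 i
        (Finset.mem_univ i)
      have := pow_eq_zero_iff (n := 2) (by norm_num) |>.mp this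
      exact norm_eq_zero.mp this
    have : vstate (colv j ρ) = 0 := by
      ext i k
      rw [vstate_apply, hcv i]
      simp
    rw [this, hw]
    simp
  · show (wt j ρ : ℝ) • ((wt j ρ : ℝ)⁻¹ • vstate (colv j ρ)) = vstate (colv j ρ)
    rw [smul_smul, mul_inv_cancel₀ hw, one_smul]

lemma sum_wt_smul_purify (h : 0 < n) (ρ : stateSet n) :
    ∑ j, (wt j ρ : ℝ) • (purify h j ρ).1 = ρ.1 := by
  rw [Finset.sum_congr rfl fun j _ => wt_smul_purify h j ρ]
  exact sum_vstate_colv ρ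

lemma measurable_colv (j : Fin n) : Measurable (colv j) := by
  apply measurable_pi_lambda
  intro i
  have : (fun ρ : stateSet n => colv j ρ i)
      = (fun M : Matrix (Fin n) (Fin n) ℂ => M i j) ∘ (fun ρ : stateSet n => (ρ.2.1).sqrt) := rfl
  rw [this]
  exact (((measurable_pi_apply i).comp measurable_id).eval (a := j)).comp measurable_sqrt_state

lemma measurable_wt_real (j : Fin n) :
    Measurable (fun ρ : stateSet n => (ρ.1 j j).re) := by
  have h : Continuous fun M : Matrix (Fin n) (Fin n) ℂ => (M j j).re :=
    Complex.continuous_re.comp ((continuous_apply j).comp (continuous_apply j))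
  exact h.measurable.comp measurable_subtype_coe

lemma measurable_wt (j : Fin n) : Measurable (fun ρ : stateSet n => wt j ρ) :=
  (measurable_wt_real j).subtype_mk

lemma measurable_purify (h : 0 < n) (j : Fin n) : Measurable (purify h j) := by
  have hset : MeasurableSet {ρ : stateSet n | (wt j ρ : ℝ) = 0} := by
    have : {ρ : stateSet n | (wt j ρ : ℝ) = 0}
        = (fun ρ : stateSet n => (wt j ρ : ℝ)) ⁻¹' {0} := rfl
    rw [this]
    exact ((NNReal.continuous_coe.measurable).comp (measurable_wt j)) (measurableSet_singleton 0)
  have hvs : Measurable fun ρ : stateSet n => vstate (colv j ρ) := by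
    apply measurable_pi_lambda
    intro i
    apply measurable_pi_lambda
    intro k
    have : (fun ρ : stateSet n => vstate (colv j ρ) i k)
        = fun ρ => colv j ρ i * starRingEnd ℂ (colv j ρ k) := rfl
    rw [this]
    exact ((measurable_pi_apply i).comp (measurable_colv j)).mul
      (Complex.continuous_conj.measurable.comp ((measurable_pi_apply k).comp (measurable_colv j)))
  have hsm : Measurable fun ρ : stateSet n => (wt j ρ : ℝ)⁻¹ • vstate (colv j ρ) := by
    apply measurable_pi_lambda
    intro i
    apply measurable_pi_lambda
    intro k
    have : (fun ρ : stateSet n => ((wt j ρ : ℝ)⁻¹ • vstate (colv j ρ)) i k)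
        = fun ρ => (((wt j ρ : ℝ)⁻¹ : ℝ) : ℂ) * vstate (colv j ρ) i k := rfl
    rw [this]
    refine Measurable.mul ?_ (((measurable_pi_apply k).comp
      ((measurable_pi_apply i).comp hvs)))
    exact Complex.continuous_ofReal.measurable.comp
      ((NNReal.continuous_coe.measurable.comp (measurable_wt j)).inv)
  have : Measurable fun ρ : stateSet n => (purify h j ρ : Matrix (Fin n) (Fin n) ℂ) := by
    have heq : (fun ρ : stateSet n => (purify h j ρ : Matrix (Fin n) (Fin n) ℂ))
        = fun ρ => if (wt j ρ : ℝ) = 0 then vstate (e0 h)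
            else (wt j ρ : ℝ)⁻¹ • vstate (colv j ρ) := by
      funext ρ
      rw [purify]
      split_ifs with hw <;> rfl
    rw [heq]
    exact Measurable.ite hset measurable_const hsm
  exact this.subtype_mk

end


-- ===== measure transfer =====
noncomputable section
open Matrix MeasureTheory ComplexOrder NNReal ENNReal

variable {n : ℕ}

lemma wt_le_one' (j : Fin n) (ρ : stateSet n) : wt j ρ ≤ 1 := by
  rw [← NNReal.coe_le_coe]
  simpa using wt_le_one j ρ

lemma wt_sum_ennreal (ρ : stateSet n) : ∑ j, ((wt j ρ : ℝ≥0) : ℝ≥0∞) = 1 := by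
  rw [← ENNReal.coe_finset_sum]
  norm_cast
  rw [← NNReal.coe_inj]
  push_cast
  exact wt_sum_one ρ

lemma isFiniteMeasure_component (h : 0 < n) (μ : Measure (stateSet n)) [IsFiniteMeasure μ]
    (j : Fin n) :
    IsFiniteMeasure ((μ.withDensity (fun ρ => ((wt j ρ : ℝ≥0) : ℝ≥0∞))).map (purify h j)) := by
  constructor
  rw [Measure.map_apply (measurable_purify h j) MeasurableSet.univ, Set.preimage_univ,
    withDensity_apply _ MeasurableSet.univ, setLIntegral_univ]
  calc ∫⁻ ρ, ((wt j ρ : ℝ≥0) : ℝ≥0∞) ∂μ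
      ≤ ∫⁻ _, 1 ∂μ := lintegral_mono fun ρ => by
        exact ENNReal.coe_le_one_iff.mpr (wt_le_one' j ρ)
    _ = μ Set.univ := lintegral_one
    _ < ⊤ := measure_lt_top μ _

lemma integral_pureDecomp {E : Type*} [NormedAddCommGroup E] [NormedSpace ℝ E]
    [MeasurableSpace E] [BorelSpace E] [SecondCountableTopology E]
    (h : 0 < n) (μ : Measure (stateSet n)) [IsFiniteMeasure μ]
    (g : stateSet n → E) (hg : Measurable g) (C : ℝ) (hC : ∀ ρ, ‖g ρ‖ ≤ C) :
    ∫ ρ, g ρ ∂(∑ j, (μ.withDensity (fun ρ => ((wt j ρ : ℝ≥0) : ℝ≥0∞))).map (purify h j))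
      = ∫ ρ, ∑ j, (wt j ρ : ℝ) • g (purify h j ρ) ∂μ := by
  have hint : ∀ j : Fin n, Integrable g
      ((μ.withDensity (fun ρ => ((wt j ρ : ℝ≥0) : ℝ≥0∞))).map (purify h j)) := by
    intro j
    have := isFiniteMeasure_component h μ j
    exact ⟨hg.aestronglyMeasurable, HasFiniteIntegral.of_bounded (ae_of_all _ hC)⟩
  rw [integral_finset_sum_measure (fun j _ => hint j)]
  have hstep : ∀ j : Fin n,
      ∫ ρ, g ρ ∂((μ.withDensity (fun ρ => ((wt j ρ : ℝ≥0) : ℝ≥0∞))).map (purify h j))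
        = ∫ ρ, (wt j ρ : ℝ) • g (purify h j ρ) ∂μ := by
    intro j
    rw [integral_map (measurable_purify h j).aemeasurable hg.aestronglyMeasurable]
    rw [integral_withDensity_eq_integral_smul (measurable_wt j)]
    refine integral_congr_ae (ae_of_all _ fun ρ => ?_)
    simp only [NNReal.smul_def]
  rw [Finset.sum_congr rfl fun j _ => hstep j]
  rw [← integral_finset_sum]
  intro j _
  refine ⟨(((measurable_coe_nnreal_real.comp (measurable_wt j))).smul
    (hg.comp (measurable_purify h j))).aestronglyMeasurable, ?_⟩
  apply HasFiniteIntegral.of_bounded (C := C)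
  refine ae_of_all _ fun ρ => ?_
  rw [norm_smul]
  calc ‖(wt j ρ : ℝ)‖ * ‖g (purify h j ρ)‖ ≤ 1 * C := by
        refine mul_le_mul ?_ (hC _) (norm_nonneg _) one_pos.le
        rw [Real.norm_eq_abs, abs_of_nonneg (wt j ρ).coe_nonneg]
        exact wt_le_one j ρ
    _ = C := one_mul C

lemma state_entry_norm_le_one (ρ : stateSet n) (i k : Fin n) : ‖ρ.1 i k‖ ≤ 1 := by
  have hmul : (ρ.2.1).sqrt * (ρ.2.1).sqrt = ρ.1 := (ρ.2.1).sqrt_mul_self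
  have hexp : ρ.1 i k = ∑ j, (ρ.2.1).sqrt i j * star ((ρ.2.1).sqrt k j) := by
    conv_lhs => rw [← hmul]
    rw [Matrix.mul_apply]
    exact Finset.sum_congr rfl fun j _ => by rw [sqrt_herm_entry ρ k j]
  have hcs : (∑ j, ‖(ρ.2.1).sqrt i j‖ * ‖(ρ.2.1).sqrt k j‖) ^ 2
      ≤ (∑ j, ‖(ρ.2.1).sqrt i j‖ ^ 2) * (∑ j, ‖(ρ.2.1).sqrt k j‖ ^ 2) :=
    Finset.sum_mul_sq_le_sq_mul_sq Finset.univ _ _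
  have hsum : ∀ l : Fin n, ∑ j, ‖(ρ.2.1).sqrt l j‖ ^ 2 = (wt l ρ : ℝ) := by
    intro l
    rw [← colv_norm_sum l ρ]
    refine Finset.sum_congr rfl fun j _ => ?_
    rw [show (ρ.2.1).sqrt l j = star ((ρ.2.1).sqrt j l) from sqrt_herm_entry ρ j l, norm_star]
    rfl
  have hnn : (0:ℝ) ≤ ∑ j, ‖(ρ.2.1).sqrt i j‖ * ‖(ρ.2.1).sqrt k j‖ :=
    Finset.sum_nonneg fun j _ => mul_nonneg (norm_nonneg _) (norm_nonneg _)
  have htri : ‖ρ.1 i k‖ ≤ ∑ j, ‖(ρ.2.1).sqrt i j‖ * ‖(ρ.2.1).sqrt k j‖ := by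
    rw [hexp]
    refine (norm_sum_le _ _).trans (le_of_eq (Finset.sum_congr rfl fun j _ => ?_))
    rw [norm_mul, norm_star]
  have h1 := hcs
  rw [hsum i, hsum k] at h1
  have h2 : (wt i ρ : ℝ) * (wt k ρ : ℝ) ≤ 1 :=
    mul_le_one₀ (wt_le_one i ρ) (wt k ρ).coe_nonneg (wt_le_one k ρ)
  nlinarith [htri, hnn, h1, h2, norm_nonneg (ρ.1 i k)]

end

section MainProof
open NNReal ENNReal

/-- For any generalized ensemble `μ₀` there is an ensemble `μ*` supported by pure states
with the same barycenter and at least as large output χ-quantity. -/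
theorem exists_pure_ensemble_ge_output_chi
    (dA dB dE : ℕ) (hdA : 0 < dA) (hdB : 0 < dB) (hdE : 0 < dE)
    (V : Matrix (Fin dB × Fin dE) (Fin dA) ℂ) (hV : Vᴴ * V = 1)
    (μ₀ : ProbabilityMeasure (stateSet dA)) :
    ∃ μs : ProbabilityMeasure (stateSet dA),
      (μs : Measure (stateSet dA)) (pureStates dA) = 1 ∧
      barycenter μs = barycenter μ₀ ∧
      gChiOut (chanPhi V) μ₀ ≤ gChiOut (chanPhi V) μs := by
  classical
  set ν : Measure (stateSet dA) := ∑ j, ((μ₀ : Measure (stateSet dA)).withDensity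
      (fun ρ => ((wt j ρ : ℝ≥0) : ℝ≥0∞))).map (purify hdA j) with hν
  have hν_full : ∀ s : Set (stateSet dA), MeasurableSet s →
      (∀ j ρ, purify hdA j ρ ∈ s) → ν s = 1 := by
    intro s hs hmem
    rw [hν, MeasureTheory.Measure.finset_sum_apply]
    have hterm : ∀ j : Fin dA, (((μ₀ : Measure (stateSet dA)).withDensity
        (fun ρ => ((wt j ρ : ℝ≥0) : ℝ≥0∞))).map (purify hdA j)) s
        = ∫⁻ ρ, ((wt j ρ : ℝ≥0) : ℝ≥0∞) ∂(μ₀ : Measure (stateSet dA)) := by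
      intro j
      rw [MeasureTheory.Measure.map_apply (measurable_purify hdA j) hs]
      have hpre : (purify hdA j) ⁻¹' s = Set.univ := by
        ext ρ
        simp [hmem j ρ]
      rw [hpre, withDensity_apply _ MeasurableSet.univ, setLIntegral_univ]
    rw [Finset.sum_congr rfl fun j _ => hterm j]
    rw [← MeasureTheory.lintegral_finset_sum _
      (fun j _ => (measurable_wt j).coe_nnreal_ennreal)]
    have h1 : ∫⁻ ρ, ∑ j, ((wt j ρ : ℝ≥0) : ℝ≥0∞) ∂(μ₀ : Measure (stateSet dA))
        = ∫⁻ _, 1 ∂(μ₀ : Measure (stateSet dA)) :=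
      lintegral_congr fun ρ => wt_sum_ennreal ρ
    rw [h1, lintegral_one, measure_univ]
  have hprob : IsProbabilityMeasure ν :=
    ⟨hν_full Set.univ MeasurableSet.univ (fun _ _ => Set.mem_univ _)⟩
  have hgmeas : ∀ i k : Fin dA, Measurable fun ρ : stateSet dA => ρ.1 i k := by
    intro i k
    have hc : Continuous fun M : Matrix (Fin dA) (Fin dA) ℂ => M i k :=
      (continuous_apply k).comp (continuous_apply i)
    exact (hc.comp continuous_subtype_val).measurable
  have hbar : barycenter (⟨ν, hprob⟩ : ProbabilityMeasure (stateSet dA)) = barycenter μ₀ := by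
    have hcoe : ((⟨ν, hprob⟩ : ProbabilityMeasure (stateSet dA)) :
        Measure (stateSet dA)) = ν := rfl
    ext i k
    simp only [barycenter, Matrix.of_apply]
    show (∫ ρ : stateSet dA, ρ.1 i k ∂ν)
      = ∫ ρ : stateSet dA, ρ.1 i k ∂(μ₀ : Measure (stateSet dA))
    rw [hν]
    rw [integral_pureDecomp hdA (μ₀ : Measure (stateSet dA)) (fun ρ => ρ.1 i k)
      (hgmeas i k) 1 (fun ρ => state_entry_norm_le_one ρ i k)]
    refine integral_congr_ae (ae_of_all _ fun ρ => ?_)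
    have h2 := congrFun (congrFun (sum_wt_smul_purify hdA ρ) i) k
    rw [Matrix.sum_apply] at h2
    simpa [Matrix.smul_apply] using h2
  refine ⟨⟨ν, hprob⟩, ?_, hbar, ?_⟩
  · have hpureo : MeasurableSet (pureStates dA) := by
      have hset : pureStates dA = (fun ρ : stateSet dA => ρ.1 * ρ.1 - ρ.1) ⁻¹' {0} := by
        ext ρ
        simp [pureStates, sub_eq_zero]
      rw [hset]
      have hc : Continuous fun ρ : stateSet dA => ρ.1 * ρ.1 - ρ.1 :=
        (continuous_subtype_val.matrix_mul continuous_subtype_val).sub continuous_subtype_val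
      exact hc.measurable (measurableSet_singleton 0)
    exact hν_full (pureStates dA) hpureo (fun j ρ => purify_pure hdA j ρ)
  · set f : stateSet dA → ℝ := fun ρ => vnEntropy (chanPhi V ρ.1) with hf
    have hfm : Measurable f := measurable_vnEntropy_comp (chanPhi V) (chanPhi_continuous V)
      (fun ρ => chanPhi_mem_stateSet V hV ρ.2)
    have hfb : ∀ ρ : stateSet dA, ‖f ρ‖ ≤ (dB : ℝ) := by
      intro ρ
      have hs := chanPhi_mem_stateSet V hV ρ.2
      rw [hf, Real.norm_eq_abs, abs_of_nonneg (vnEntropy_nonneg hs)]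
      exact vnEntropy_le_card hs
    simp only [gChiOut]
    rw [hbar]
    apply sub_le_sub_left
    show (∫ ρ : stateSet dA, f ρ ∂ν) ≤ ∫ ρ : stateSet dA, f ρ ∂(μ₀ : Measure (stateSet dA))
    rw [hν]
    rw [integral_pureDecomp hdA (μ₀ : Measure (stateSet dA)) f hfm (dB : ℝ) hfb]
    refine integral_mono ?_ ?_ ?_
    · refine ⟨(Finset.measurable_sum Finset.univ fun j _ =>
        ((measurable_coe_nnreal_real.comp (measurable_wt j)).smul
          (hfm.comp (measurable_purify hdA j)))).aestronglyMeasurable, ?_⟩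
      apply HasFiniteIntegral.of_bounded (C := (dB : ℝ))
      refine ae_of_all _ fun ρ => ?_
      calc ‖∑ j, (wt j ρ : ℝ) • f (purify hdA j ρ)‖
          ≤ ∑ j, ‖(wt j ρ : ℝ) • f (purify hdA j ρ)‖ := norm_sum_le _ _
        _ ≤ ∑ j, (wt j ρ : ℝ) * (dB : ℝ) := by
            refine Finset.sum_le_sum fun j _ => ?_
            rw [norm_smul, Real.norm_eq_abs, abs_of_nonneg (wt j ρ).coe_nonneg]
            exact mul_le_mul_of_nonneg_left (hfb _) (wt j ρ).coe_nonneg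
        _ = (dB : ℝ) := by rw [← Finset.sum_mul, wt_sum_one, one_mul]
    · exact ⟨hfm.aestronglyMeasurable, HasFiniteIntegral.of_bounded (ae_of_all _ hfb)⟩
    · intro ρ
      have hcc := vnEntropy_concave (fun j => (wt j ρ : ℝ))
        (fun j => chanPhi V (purify hdA j ρ).1)
        (fun j => chanPhi_mem_stateSet V hV (purify hdA j ρ).2)
        (fun j => (wt j ρ).coe_nonneg) (wt_sum_one ρ)
      have heq : (∑ j, (wt j ρ : ℝ) • chanPhi V (purify hdA j ρ).1) = chanPhi V ρ.1 := by
        rw [← chanPhi_sum_smul, sum_wt_smul_purify hdA ρ]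
      rw [heq] at hcc
      show ∑ j, (wt j ρ : ℝ) • f (purify hdA j ρ) ≤ f ρ
      simpa [hf, smul_eq_mul] using hcc

end MainProof
end

section
/- Let d_A, d_B, d_E be positive natural numbers and V an isometry from ℂ^{d_A} to ℂ^{d_B} ⊗ ℂ^{d_E}, with associated channel Φ(ρ) = Tr_E(V ρ Vᴴ) and complementary channel Φ̂(ρ) = Tr_B(V ρ Vᴴ). Then for every finite ensemble {π_i, P_i}_{i∈Fin m} in which every P_i is a pure state (a rank-one projection), with average state ρ = ∑_i π_i P_i, the coherent information satisfies H(Φ(ρ)) − H(Φ̂(ρ)) = χ({π_i, Φ(P_i)}) − χ({π_i, Φ̂(P_i)}). -/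
open Matrix ComplexOrder

section Aux

open Polynomial

lemma eval_charpoly' {n : Type*} [Fintype n] [DecidableEq n] (M : Matrix n n ℂ) (x : ℂ) :
    M.charpoly.eval x = (x • (1 : Matrix n n ℂ) - M).det := by
  have hs : (Matrix.scalar n x) = x • (1 : Matrix n n ℂ) := by
    ext i j
    by_cases h : i = j <;> simp [Matrix.scalar_apply, Matrix.one_apply, h]
  rw [Matrix.charpoly, eval_det, Matrix.matPolyEquiv_charmatrix]
  rw [Polynomial.eval_sub, Polynomial.eval_X, Polynomial.eval_C, hs]

lemma det_smul_one_sub {m : Type*} [Fintype m] [DecidableEq m] (x : ℂ) (hx : x ≠ 0)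
    (M : Matrix m m ℂ) :
    (x • (1 : Matrix m m ℂ) - M).det = x ^ Fintype.card m * (1 - x⁻¹ • M).det := by
  have h : x • ((1 : Matrix m m ℂ) - x⁻¹ • M) = x • (1 : Matrix m m ℂ) - M := by
    rw [smul_sub, smul_smul, mul_inv_cancel₀ hx, one_smul]
  rw [← h, Matrix.det_smul]

lemma charpoly_mul_conjT {p q : Type*} [Fintype p] [Fintype q] [DecidableEq p] [DecidableEq q]
    [Nonempty p] [Nonempty q] (A : Matrix p q ℂ) :
    (A * Aᴴ).charpoly * X ^ (Fintype.card q) = (Aᴴ * A).charpoly * X ^ (Fintype.card p) := by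
  apply Polynomial.funext
  intro x
  simp only [eval_mul, eval_pow, eval_X, eval_charpoly']
  rcases eq_or_ne x 0 with rfl | hx
  · simp [zero_pow, Fintype.card_ne_zero]
  · rw [det_smul_one_sub x hx, det_smul_one_sub x hx]
    have hc : (1 - x⁻¹ • (A * Aᴴ)).det = (1 - x⁻¹ • (Aᴴ * A)).det := by
      rw [← Matrix.smul_mul, Matrix.det_one_sub_mul_comm, Matrix.mul_smul]
    rw [hc]; ring

lemma charpoly_transpose' {n : Type*} [Fintype n] [DecidableEq n] (A : Matrix n n ℂ) :
    Aᵀ.charpoly = A.charpoly := by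
  rw [Matrix.charpoly, Matrix.charpoly, ← Matrix.det_transpose (Matrix.charmatrix Aᵀ)]
  congr 1
  ext i j
  by_cases h : i = j <;>
    simp [Matrix.charmatrix_apply, Matrix.transpose_apply, h, Matrix.diagonal,
      Ne.symm, eq_comm]

lemma charpoly_isHermitian_eq_prod {n : Type*} [Fintype n] [DecidableEq n]
    {A : Matrix n n ℂ} (hA : A.IsHermitian) :
    A.charpoly = ∏ i, (X - C ((hA.eigenvalues i : ℂ))) := by
  apply Polynomial.funext
  intro x
  rw [eval_charpoly']
  set U : Matrix n n ℂ := (hA.eigenvectorUnitary : Matrix n n ℂ)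
  have hU1 : U * Uᴴ = 1 := by
    rw [← Matrix.star_eq_conjTranspose]
    exact (Matrix.mem_unitaryGroup_iff).mp hA.eigenvectorUnitary.2
  have hU2 : Uᴴ * U = 1 := by
    rw [← Matrix.star_eq_conjTranspose]
    exact (Matrix.mem_unitaryGroup_iff').mp hA.eigenvectorUnitary.2
  have hdet : det U * det Uᴴ = 1 := by rw [← det_mul, hU1, det_one]
  have hdiag : x • (1 : Matrix n n ℂ) - Matrix.diagonal (fun i => (hA.eigenvalues i : ℂ))
      = Matrix.diagonal (fun i => x - (hA.eigenvalues i : ℂ)) := by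
    ext i j
    by_cases h : i = j <;> simp [Matrix.one_apply, h]
  have hconj : x • (1 : Matrix n n ℂ) - A
      = U * (x • 1 - Matrix.diagonal (fun i => (hA.eigenvalues i : ℂ))) * Uᴴ := by
    rw [Matrix.mul_sub, Matrix.sub_mul]
    rw [mul_smul_comm, Matrix.mul_one, smul_mul_assoc, hU1]
    congr 1
    conv_lhs => rw [hA.spectral_theorem]
    rw [Unitary.conjStarAlgAut_apply, Matrix.star_eq_conjTranspose]
    rfl
  rw [hconj, det_mul, det_mul, mul_comm (det U), mul_assoc, hdet, mul_one,
    hdiag, det_diagonal, eval_prod]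
  simp

lemma roots_prod_X_sub_C_mul_X_pow {n : Type*} [Fintype n] (c : n → ℂ) (k : ℕ) :
    ((∏ i, (X - C (c i))) * X ^ k).roots
      = Finset.univ.val.map c + Multiset.replicate k 0 := by
  have h1 : (∏ i, (X - C (c i))) = ((Finset.univ.val.map c).map fun a => X - C a).prod := by
    rw [Multiset.map_map]
    rfl
  have hm : (∏ i, (X - C (c i))).Monic := monic_prod_of_monic _ _ fun i _ => monic_X_sub_C _
  rw [Polynomial.roots_mul (by exact (hm.mul (monic_X_pow k)).ne_zero), h1,
    Polynomial.roots_multiset_prod_X_sub_C, Polynomial.roots_pow, Polynomial.roots_X,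
    Multiset.nsmul_singleton]

lemma vnEntropy_eq_of_charpoly {n k : ℕ}
    {A : Matrix (Fin n) (Fin n) ℂ} {B : Matrix (Fin k) (Fin k) ℂ}
    (hA : A.IsHermitian) (hB : B.IsHermitian)
    (h : A.charpoly * X ^ k = B.charpoly * X ^ n) :
    vnEntropy A = vnEntropy B := by
  rw [charpoly_isHermitian_eq_prod hA, charpoly_isHermitian_eq_prod hB] at h
  have hr := congrArg Polynomial.roots h
  rw [roots_prod_X_sub_C_mul_X_pow, roots_prod_X_sub_C_mul_X_pow] at hr
  have hs := congrArg (fun s : Multiset ℂ => ((s.map fun z => Real.negMulLog z.re)).sum) hr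
  simp only [Multiset.map_add, Multiset.sum_add, Multiset.map_map, Multiset.map_replicate,
    Function.comp] at hs
  simp only [Complex.zero_re, Real.negMulLog_zero, Multiset.sum_replicate, smul_zero,
    add_zero, Complex.ofReal_re] at hs
  rw [vnEntropy, vnEntropy, dif_pos hA, dif_pos hB]
  simpa [Finset.sum] using hs

lemma entropy_marginals_pure {dB dE : ℕ} (hdB : 0 < dB) (hdE : 0 < dE)
    (ω : Matrix (Fin dB × Fin dE) (Fin dB × Fin dE) ℂ)
    (hH : ω.IsHermitian) (hid : ω * ω = ω) (htr : ω.trace = 1) :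
    vnEntropy (ptraceE ω) = vnEntropy (ptraceB ω) := by
  haveI : Nonempty (Fin dB) := ⟨⟨0, hdB⟩⟩
  haveI : Nonempty (Fin dE) := ⟨⟨0, hdE⟩⟩
  set U : Matrix (Fin dB × Fin dE) (Fin dB × Fin dE) ℂ := ((hH.eigenvectorUnitary : unitaryGroup (Fin dB × Fin dE) ℂ) : Matrix (Fin dB × Fin dE) (Fin dB × Fin dE) ℂ)
    with hUdef
  set ev : Fin dB × Fin dE → ℝ := hH.eigenvalues with hevdef
  have hU1 : U * star U = 1 := (Matrix.mem_unitaryGroup_iff).mp hH.eigenvectorUnitary.2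
  have hU2 : star U * U = 1 := (Matrix.mem_unitaryGroup_iff').mp hH.eigenvectorUnitary.2
  have hDeq : star U * ω * U = Matrix.diagonal (fun i => (ev i : ℂ)) :=
    by
      conv_lhs => rw [hH.spectral_theorem, Unitary.conjStarAlgAut_apply]
      simp only [← Matrix.mul_assoc, hU2, Matrix.one_mul]
      rw [Matrix.mul_assoc, hU2, Matrix.mul_one, Matrix.one_mul]
      rfl
  have hD2 : Matrix.diagonal (fun i => (ev i : ℂ)) * Matrix.diagonal (fun i => (ev i : ℂ))
      = Matrix.diagonal (fun i => (ev i : ℂ)) := by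
    rw [← hDeq]
    calc (star U * ω * U) * (star U * ω * U) = star U * ω * (U * star U) * ω * U := by
          noncomm_ring
      _ = star U * (ω * ω) * U := by rw [hU1]; noncomm_ring
      _ = star U * ω * U := by rw [hid]
  have hev01 : ∀ i, ev i = 0 ∨ ev i = 1 := by
    intro i
    have := congrArg (fun M => M i i) hD2
    simp only [Matrix.diagonal_mul_diagonal, Matrix.diagonal_apply_eq] at this
    have h2 : ev i * ev i = ev i := by exact_mod_cast this
    have h3 : ev i * (ev i - 1) = 0 := by ring_nf; linear_combination h2
    rcases mul_eq_zero.mp h3 with h | h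
    · exact Or.inl h
    · exact Or.inr (by linarith [sub_eq_zero.mp h])
  have htr2 : ∑ i, ev i = 1 := by
    have h1 : ω.trace = Matrix.trace (Matrix.diagonal (fun i => (ev i : ℂ))) := by
      rw [← hDeq, Matrix.trace_mul_cycle]; rw [hU1, Matrix.one_mul]
    rw [htr, Matrix.trace_diagonal] at h1
    exact_mod_cast h1.symm
  have hcard : (Finset.univ.filter fun i => ev i = 1).card = 1 := by
    have : ∑ i, ev i = ∑ i, (if ev i = 1 then (1:ℝ) else 0) := by
      apply Finset.sum_congr rfl
      intro i _
      rcases hev01 i with h | h <;> simp [h]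
    rw [this, Finset.sum_boole] at htr2
    exact_mod_cast htr2
  obtain ⟨j, hj⟩ := Finset.card_eq_one.mp hcard
  have hevj : ∀ i, (ev i : ℂ) = if i = j then 1 else 0 := by
    intro i
    by_cases h : i = j
    · subst h
      have : i ∈ Finset.univ.filter fun i' => ev i' = 1 := by rw [hj]; exact Finset.mem_singleton_self i
      have := (Finset.mem_filter.mp this).2
      simp [this]
    · have : i ∉ Finset.univ.filter fun i' => ev i' = 1 := by rw [hj]; simp [h]
      have h0 : ev i ≠ 1 := by simpa using this
      rcases hev01 i with h' | h'
      · simp [h, h']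
      · exact absurd h' h0
  set v : Fin dB × Fin dE → ℂ := fun p => U p j with hvdef
  have hspec2 : ω = U * Matrix.diagonal (fun i => (ev i : ℂ)) * star U := by
    rw [← hDeq]
    calc ω = (U * star U) * ω * (U * star U) := by rw [hU1, Matrix.one_mul, Matrix.mul_one]
      _ = U * (star U * ω * U) * star U := by noncomm_ring
  have hω : ∀ p q, ω p q = v p * star (v q) := by
    intro p q
    conv_lhs => rw [hspec2]
    rw [Matrix.mul_apply]
    have hterm : ∀ l, (U * Matrix.diagonal (fun i => (ev i : ℂ))) p l * (star U) l q
        = (if l = j then U p j * star (U q j) else 0) := by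
      intro l
      rw [Matrix.mul_diagonal, Matrix.star_eq_conjTranspose, Matrix.conjTranspose_apply]
      by_cases h : l = j
      · subst h
        rw [hevj]
        simp
      · have h0 : (ev l : ℂ) = 0 := by rw [hevj]; simp [h]
        rw [h0]
        simp [h]
    rw [Finset.sum_congr rfl fun l _ => hterm l, Finset.sum_ite_eq' Finset.univ j]
    simp [v]
  set M : Matrix (Fin dB) (Fin dE) ℂ := Matrix.of fun b e => v (b, e) with hMdef
  have hE : ptraceE ω = M * Mᴴ := by
    ext b b'
    simp [ptraceE, Matrix.mul_apply, Matrix.conjTranspose_apply, hω, M]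
  have hBtr : ptraceB ω = Mᵀ * (Mᵀ)ᴴ := by
    ext e e'
    simp [ptraceB, Matrix.mul_apply, Matrix.conjTranspose_apply, hω, M]
  have h1 := charpoly_mul_conjT M
  have h2 := charpoly_mul_conjT Mᵀ
  have h3 : (Mᵀ)ᴴ * Mᵀ = (M * Mᴴ)ᵀ := by
    have : (Mᵀ)ᴴ = (Mᴴ)ᵀ := by
      ext i k
      simp [Matrix.conjTranspose_apply, Matrix.transpose_apply]
    rw [Matrix.transpose_mul, this]
  rw [h3, charpoly_transpose'] at h2
  simp only [Fintype.card_fin] at h1 h2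
  rw [hE, hBtr]
  exact vnEntropy_eq_of_charpoly (Matrix.isHermitian_mul_conjTranspose_self M)
    (Matrix.isHermitian_mul_conjTranspose_self Mᵀ) h2.symm

end Aux

/-- For an ensemble of pure states with average state `ρ`, the coherent information
`H(Φ(ρ)) − H(Φ̂(ρ))` equals the difference of the output χ-quantities
`χ(Φ(μ)) − χ(Φ̂(μ))`. -/
theorem coherent_info_eq_chi_diff_of_pure_ensemble
    (dA dB dE : ℕ) (hdA : 0 < dA) (hdB : 0 < dB) (hdE : 0 < dE)
    (V : Matrix (Fin dB × Fin dE) (Fin dA) ℂ) (hV : Vᴴ * V = 1)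
    (m : ℕ) (π : Fin m → ℝ) (hπ0 : ∀ i, 0 ≤ π i) (hπ1 : ∑ i, π i = 1)
    (P : Fin m → Matrix (Fin dA) (Fin dA) ℂ)
    (hP : ∀ i, (P i).PosSemidef ∧ (P i).trace = 1)
    (hPure : ∀ i, P i * P i = P i) :
    vnEntropy (chanPhi V (∑ i, π i • P i)) - vnEntropy (chanPhiHat V (∑ i, π i • P i))
      = finChi π (fun i => chanPhi V (P i)) - finChi π (fun i => chanPhiHat V (P i)) := by
  have key : ∀ i, vnEntropy (chanPhi V (P i)) = vnEntropy (chanPhiHat V (P i)) := by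
    intro i
    have hHerm : (V * P i * Vᴴ).IsHermitian := by
      have h := (hP i).1.1
      unfold Matrix.IsHermitian at h ⊢
      rw [Matrix.conjTranspose_mul, Matrix.conjTranspose_mul, Matrix.conjTranspose_conjTranspose,
        h, Matrix.mul_assoc]
    have hid : (V * P i * Vᴴ) * (V * P i * Vᴴ) = V * P i * Vᴴ := by
      have h1 : (V * P i * Vᴴ) * (V * P i * Vᴴ) = V * (P i * ((Vᴴ * V) * (P i * Vᴴ))) := by
        simp only [Matrix.mul_assoc]
      rw [h1, hV, Matrix.one_mul, ← Matrix.mul_assoc, ← Matrix.mul_assoc,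
        Matrix.mul_assoc V (P i) (P i), hPure i]
    have htr : (V * P i * Vᴴ).trace = 1 := by
      rw [Matrix.trace_mul_cycle, hV, Matrix.one_mul, (hP i).2]
    exact entropy_marginals_pure hdB hdE _ hHerm hid htr
  have hlin : V * (∑ i, π i • P i) * Vᴴ = ∑ i, π i • (V * P i * Vᴴ) := by
    rw [Matrix.mul_sum, Matrix.sum_mul]
    apply Finset.sum_congr rfl
    intro i _
    rw [Matrix.mul_smul, Matrix.smul_mul]
  have hsumE : (∑ i, π i • chanPhi V (P i)) = chanPhi V (∑ i, π i • P i) := by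
    unfold chanPhi
    rw [hlin]
    ext b b'
    simp only [ptraceE, Matrix.of_apply, Matrix.sum_apply, Matrix.smul_apply, Finset.sum_apply]
    rw [Finset.sum_comm]
    simp [Finset.smul_sum]
  have hsumB : (∑ i, π i • chanPhiHat V (P i)) = chanPhiHat V (∑ i, π i • P i) := by
    unfold chanPhiHat
    rw [hlin]
    ext e e'
    simp only [ptraceB, Matrix.of_apply, Matrix.sum_apply, Matrix.smul_apply, Finset.sum_apply]
    rw [Finset.sum_comm]
    simp [Finset.smul_sum]
  have hS : ∑ i, π i * vnEntropy (chanPhi V (P i)) = ∑ i, π i * vnEntropy (chanPhiHat V (P i)) := by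
    apply Finset.sum_congr rfl
    intro i _
    rw [key i]
  unfold finChi
  rw [hsumE, hsumB, hS]
  ring
end
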